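/- Let X be a real Banach space whose topological dual X* is uniformly convex. For every ε > 0 and r > 0 there exists N > 0 such that the following holds: for all x₁, x₂ ∈ X with ‖x₁ − x₂‖ ≤ r, ‖x₁‖ ≥ N and ‖x₂‖ ≥ N, and all f₁, f₂ ∈ X* with ‖fᵢ‖ = ‖xᵢ‖ and fᵢ(xᵢ) = ‖xᵢ‖² (i = 1, 2), one has ‖(1/‖x₁‖)·f₁ − (1/‖x₂‖)·f₂‖ < ε. -/

import Mathlib

/-- Uniform continuity of the normalized duality map far from the origin: if the dual of
the real Banach space `X` is uniformly convex, then for all `ε, r > 0` there is `N > 0`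
such that whenever `‖x₁ − x₂‖ ≤ r`, `‖x₁‖, ‖x₂‖ ≥ N`, and `fᵢ` are the norming
functionals of `xᵢ` (i.e. `‖fᵢ‖ = ‖xᵢ‖` and `fᵢ xᵢ = ‖xᵢ‖²`), the normalized
functionals `fᵢ/‖xᵢ‖` are `ε`-close. -/
theorem normalized_duality_map_uniformly_continuous
    (X : Type*) [NormedAddCommGroup X] [NormedSpace ℝ X] [CompleteSpace X]
    [UniformConvexSpace (StrongDual ℝ X)] :
    ∀ ε > (0 : ℝ), ∀ r > (0 : ℝ), ∃ N > (0 : ℝ),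
      ∀ (x₁ x₂ : X) (f₁ f₂ : StrongDual ℝ X),
        ‖x₁ - x₂‖ ≤ r → N ≤ ‖x₁‖ → N ≤ ‖x₂‖ →
        ‖f₁‖ = ‖x₁‖ → f₁ x₁ = ‖x₁‖ ^ 2 →
        ‖f₂‖ = ‖x₂‖ → f₂ x₂ = ‖x₂‖ ^ 2 →
        ‖‖x₁‖⁻¹ • f₁ - ‖x₂‖⁻¹ • f₂‖ < ε := by
  intro ε hε r hr
  obtain ⟨δ, hδ, H⟩ :=
    exists_forall_sphere_dist_add_le_two_sub (StrongDual ℝ X) hε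
  refine ⟨2 * r / δ + 1, by positivity, ?_⟩
  intro x₁ x₂ f₁ f₂ hsub hN1 hN2 hf1n hf1 hf2n hf2
  have hNpos : (0 : ℝ) < 2 * r / δ + 1 := by positivity
  have h1 : (0 : ℝ) < ‖x₁‖ := lt_of_lt_of_le hNpos hN1
  have h2 : (0 : ℝ) < ‖x₂‖ := lt_of_lt_of_le hNpos hN2
  set g₁ : StrongDual ℝ X := ‖x₁‖⁻¹ • f₁ with hg₁
  set g₂ : StrongDual ℝ X := ‖x₂‖⁻¹ • f₂ with hg₂
  have hg1n : ‖g₁‖ = 1 := by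
    rw [hg₁, norm_smul, Real.norm_eq_abs, abs_of_pos (by positivity), hf1n,
      inv_mul_cancel₀ h1.ne']
  have hg2n : ‖g₂‖ = 1 := by
    rw [hg₂, norm_smul, Real.norm_eq_abs, abs_of_pos (by positivity), hf2n,
      inv_mul_cancel₀ h2.ne']
  by_contra hcon
  push_neg at hcon
  have hsum : ‖g₁ + g₂‖ ≤ 2 - δ := H hg1n hg2n hcon
  -- lower bound on (g₁ + g₂) x₁
  have hval : (g₁ + g₂) x₁ = ‖x₁‖⁻¹ * f₁ x₁ + ‖x₂‖⁻¹ * f₂ x₁ := by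
    simp [hg₁, hg₂]
  have hfd : f₂ x₁ = ‖x₂‖ ^ 2 + f₂ (x₁ - x₂) := by
    rw [map_sub, hf2]; ring
  have hfd2 : ‖f₂ (x₁ - x₂)‖ ≤ ‖x₂‖ * r := by
    calc ‖f₂ (x₁ - x₂)‖ ≤ ‖f₂‖ * ‖x₁ - x₂‖ := f₂.le_opNorm _
    _ ≤ ‖x₂‖ * r := by rw [hf2n]; exact mul_le_mul_of_nonneg_left hsub h2.le
  have hfd3 : -(‖x₂‖ * r) ≤ f₂ (x₁ - x₂) := by
    have := neg_abs_le (f₂ (x₁ - x₂))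
    rw [← Real.norm_eq_abs] at this
    linarith
  have hnormle : ‖x₁‖ - r ≤ ‖x₂‖ := by
    have := norm_sub_norm_le x₁ x₂
    linarith
  have hlow : 2 * ‖x₁‖ - 2 * r ≤ (g₁ + g₂) x₁ := by
    rw [hval, hf1, hfd]
    have e1 : ‖x₁‖⁻¹ * ‖x₁‖ ^ 2 = ‖x₁‖ := by field_simp
    have e2 : ‖x₂‖⁻¹ * (‖x₂‖ ^ 2 + f₂ (x₁ - x₂)) = ‖x₂‖ + ‖x₂‖⁻¹ * f₂ (x₁ - x₂) := by
      field_simp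
    rw [e1, e2]
    have e3 : -r ≤ ‖x₂‖⁻¹ * f₂ (x₁ - x₂) := by
      have : ‖x₂‖⁻¹ * (-(‖x₂‖ * r)) ≤ ‖x₂‖⁻¹ * f₂ (x₁ - x₂) :=
        mul_le_mul_of_nonneg_left hfd3 (by positivity)
      calc -r = ‖x₂‖⁻¹ * (-(‖x₂‖ * r)) := by field_simp
      _ ≤ _ := this
    linarith
  have hup : (g₁ + g₂) x₁ ≤ (2 - δ) * ‖x₁‖ := by
    calc (g₁ + g₂) x₁ ≤ ‖(g₁ + g₂) x₁‖ := le_abs_self _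
    _ ≤ ‖g₁ + g₂‖ * ‖x₁‖ := (g₁ + g₂).le_opNorm _
    _ ≤ (2 - δ) * ‖x₁‖ := mul_le_mul_of_nonneg_right hsum h1.le
  -- contradiction: δ * ‖x₁‖ ≤ 2r but ‖x₁‖ ≥ 2r/δ + 1
  have hkey : δ * ‖x₁‖ ≤ 2 * r := by nlinarith
  have : δ * (2 * r / δ + 1) ≤ δ * ‖x₁‖ := mul_le_mul_of_nonneg_left hN1 hδ.le
  rw [mul_add, mul_div_cancel₀ _ hδ.ne', mul_one] at this
  linarith
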